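/- There is a Δ⁰₂ embedding f : ℕ^ℕ → ℕ^ℕ whose range is a closed subset of ℕ^ℕ and such that f(X) is a diagonally non-computable function for every X ∈ ℕ^ℕ. -/

import Mathlib

/-- The list of the first `n` values of `g`. -/
def funToList (g : ℕ → ℕ) (n : ℕ) : List ℕ := (List.range n).map g

open Classical in
/-- Characteristic (partial) function of a set of naturals, used as an oracle. -/
noncomputable def chi (A : Set ℕ) : ℕ →. ℕ := fun n => Part.some (if n ∈ A then 1 else 0)

/-- A total function regarded as a partial oracle. -/
def totalize (g : ℕ → ℕ) : ℕ →. ℕ := fun n => Part.some (g n)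

/-- Codes for oracle Turing machines (partial recursive functionals). -/
inductive OCode : Type
  | zero | succ | left | right | oracle
  | pair (a b : OCode) | comp (a b : OCode) | prec (a b : OCode) | rfind' (a : OCode)

/-- Evaluation of an oracle code with oracle `g`. -/
def OCode.eval (g : ℕ →. ℕ) : OCode → ℕ →. ℕ
  | .zero => pure 0
  | .succ => fun n => Part.some (n + 1)
  | .left => fun n => Part.some (Nat.unpair n).1
  | .right => fun n => Part.some (Nat.unpair n).2
  | .oracle => g
  | .pair a b => fun n => Nat.pair <$> OCode.eval g a n <*> OCode.eval g b n
  | .comp a b => fun n => OCode.eval g b n >>= OCode.eval g a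
  | .prec a b =>
      Nat.unpaired fun m n =>
        n.rec (OCode.eval g a m) fun y IH => do
          let i ← IH
          OCode.eval g b (Nat.pair m (Nat.pair y i))
  | .rfind' a =>
      Nat.unpaired fun m n =>
        (Nat.rfind fun k => (fun x => x = 0) <$> OCode.eval g a (Nat.pair m (k + n))).map (· + n)

/-- A surjective numbering of oracle codes. -/
def OCode.ofNat : ℕ → OCode
  | 0 => .zero
  | 1 => .succ
  | 2 => .left
  | 3 => .right
  | 4 => .oracle
  | n + 5 =>
    let m := n.div2.div2
    have hm : m < n + 5 := by
      simp only [m, Nat.div2_val]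
      exact lt_of_le_of_lt (le_trans (Nat.div_le_self _ _) (Nat.div_le_self _ _)) (by omega)
    have _m1 : m.unpair.1 < n + 5 := lt_of_le_of_lt m.unpair_left_le hm
    have _m2 : m.unpair.2 < n + 5 := lt_of_le_of_lt m.unpair_right_le hm
    match n.bodd, n.div2.bodd with
    | false, false => .pair (OCode.ofNat m.unpair.1) (OCode.ofNat m.unpair.2)
    | false, true  => .comp (OCode.ofNat m.unpair.1) (OCode.ofNat m.unpair.2)
    | true , false => .prec (OCode.ofNat m.unpair.1) (OCode.ofNat m.unpair.2)
    | true , true  => .rfind' (OCode.ofNat m)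
decreasing_by
  all_goals (try simp_wf)
  all_goals first
    | exact Nat.le_of_lt_succ _m1
    | exact Nat.le_of_lt_succ _m2
    | exact Nat.le_of_lt_succ hm
    | exact _m1
    | exact _m2
    | exact hm

/-- `{e}^g`, the `e`-th oracle machine with oracle `g`. -/
def OEval (e : ℕ) (g : ℕ →. ℕ) : ℕ →. ℕ := (OCode.ofNat e).eval g

/-- `{e}`, the `e`-th (ordinary) partial recursive function. -/
def phi (e : ℕ) : ℕ →. ℕ := (Denumerable.ofNat Nat.Partrec.Code e).eval

/-- `W_e`, the `e`-th computably enumerable set. -/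
def We (e : ℕ) : Set ℕ := {n | (phi e n).Dom}

/-- `A` is computably enumerable. -/
def CE (A : Set ℕ) : Prop := ∃ e : ℕ, A = We e

/-- `A` is Δ⁰₂ (limit computable). -/
def Delta02 (A : Set ℕ) : Prop :=
  ∃ F : ℕ → ℕ → Bool, Computable₂ F ∧ ∀ x, ∃ N, ∀ s ≥ N, (F s x = true ↔ x ∈ A)

/-- Π⁰₂ subsets of ℕ. -/
def Pi2 (S : Set ℕ) : Prop :=
  ∃ R : ℕ × ℕ × ℕ → Bool, Computable R ∧ S = {e | ∀ a, ∃ b, R (e, a, b) = true}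

/-- Π⁰₃ subsets of ℕ. -/
def Pi3 (S : Set ℕ) : Prop :=
  ∃ R : ℕ × ℕ × ℕ × ℕ → Bool, Computable R ∧ S = {e | ∀ a, ∃ b, ∀ c, R (e, a, b, c) = true}

/-- Π⁰₄ subsets of ℕ. -/
def Pi4 (S : Set ℕ) : Prop :=
  ∃ R : ℕ × ℕ × ℕ × ℕ × ℕ → Bool, Computable R ∧
    S = {e | ∀ a, ∃ b, ∀ c, ∃ d, R (e, a, b, c, d) = true}

/-- Π¹₁ subsets of ℕ (Kleene normal form). -/
def Pi11 (S : Set ℕ) : Prop :=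
  ∃ R : ℕ × List ℕ → Bool, Computable R ∧
    S = {e | ∀ f : ℕ → ℕ, ∃ n, R (e, funToList f n) = true}

/-- Many-one reducibility. -/
def ManyOneRed (T S : Set ℕ) : Prop := ∃ h : ℕ → ℕ, Computable h ∧ ∀ e, e ∈ T ↔ h e ∈ S

def Pi2Complete (S : Set ℕ) : Prop := Pi2 S ∧ ∀ T, Pi2 T → ManyOneRed T S
def Pi3Complete (S : Set ℕ) : Prop := Pi3 S ∧ ∀ T, Pi3 T → ManyOneRed T S
def Pi4Complete (S : Set ℕ) : Prop := Pi4 S ∧ ∀ T, Pi4 T → ManyOneRed T S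
def Pi11Complete (S : Set ℕ) : Prop := Pi11 S ∧ ∀ T, Pi11 T → ManyOneRed T S

/-- `g` is an `n`-bounded diagonally non-computable function. -/
def DNCb (n : ℕ) (g : ℕ → ℕ) : Prop := (∀ x, g x < n) ∧ ∀ x y, y ∈ phi x x → g x ≠ y

/-- `g` is diagonally non-computable. -/
def DNCfun (g : ℕ → ℕ) : Prop := ∀ x y, y ∈ phi x x → g x ≠ y

/-- `A` is immune: infinite with no infinite c.e. subset. -/
def Immune (A : Set ℕ) : Prop := A.Infinite ∧ ∀ B, CE B → B.Infinite → ¬B ⊆ A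

/-- `A` is bi-immune. -/
def BiImmune (A : Set ℕ) : Prop := Immune A ∧ Immune Aᶜ

/-- `f` is strongly non-recursive. -/
def SNR (f : ℕ → ℕ) : Prop :=
  ∀ h : ℕ → ℕ, Computable h → ∀ᶠ n in Filter.atTop, f n ≠ h n

/-- A canonical numbering of all finite sets (presented as lists). -/
def CanonicalNumbering (H : ℕ → List ℕ) : Prop :=
  Computable H ∧ ∀ S : Finset ℕ, ∃ e, (H e).toFinset = S

/-- `R` is canonically immune. -/
def CanonImmune (R : Set ℕ) : Prop :=
  R.Infinite ∧ ∃ h : ℕ → ℕ, Computable h ∧ ∀ H, CanonicalNumbering H →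
    ∀ᶠ e in Filter.atTop, (∀ x ∈ H e, x ∈ R) → (H e).toFinset.card ≤ h e

/-- A Medvedev reduction of `F` (class of total functions) to `G` (class of partial oracles):
a single code `e` such that `{e}^g` is total and in `F` for every `g ∈ G`. -/
def MedvedevRed (F : Set (ℕ → ℕ)) (G : Set (ℕ →. ℕ)) : Prop :=
  ∃ e : ℕ, ∀ g ∈ G, ∃ f ∈ F, ∀ x, OEval e g x = Part.some (f x)

/-- The set `G[F]` of `G`-universal `F`-codes, for classes of partial oracles `G`
and total functions `F`. -/
def UnivCodes (G : Set (ℕ →. ℕ)) (F : Set (ℕ → ℕ)) : Set ℕ :=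
  {e | ∀ g ∈ G, ∃ f ∈ F, ∀ x, OEval e g x = Part.some (f x)}

/-- The set `G[F]` with total oracles. -/
def UnivCodesT (G : Set (ℕ → ℕ)) (F : Set (ℕ → ℕ)) : Set ℕ :=
  {e | ∀ g ∈ G, ∃ f ∈ F, ∀ x, OEval e (totalize g) x = Part.some (f x)}

open Classical in
noncomputable def UnivCodesSet (A : Set (ℕ → ℕ)) (B : Set (Set ℕ)) : Set ℕ :=
  {e | ∀ Y ∈ A, ∃ S ∈ B, ∀ x, OEval e (totalize Y) x = Part.some (if x ∈ S then 1 else 0)}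

/-- Π¹₁ classes of functions. -/
def Pi11Fun (C : Set (ℕ → ℕ)) : Prop :=
  ∃ R : List ℕ × List ℕ → Bool, Computable R ∧
    C = {f | ∀ g : ℕ → ℕ, ∃ n, R (funToList f n, funToList g n) = true}

/-- Σ¹₁ classes of functions. -/
def Sigma11Fun (C : Set (ℕ → ℕ)) : Prop :=
  ∃ R : List ℕ × List ℕ → Bool, Computable R ∧
    C = {f | ∃ g : ℕ → ℕ, ∀ n, R (funToList f n, funToList g n) = true}

/-- Hyperarithmetic (Δ¹₁) classes of functions. -/
def Hyp (C : Set (ℕ → ℕ)) : Prop := Pi11Fun C ∧ Sigma11Fun C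

/-- Hyperarithmetic classes of sets, via characteristic functions. -/
def HypSet (C : Set (Set ℕ)) : Prop :=
  Hyp {f | (∀ n, f n ≤ 1) ∧ {n | f n = 1} ∈ C}

/-- `B` is a tail set: closed under finite modifications. -/
def TailSet (B : Set (Set ℕ)) : Prop :=
  ∀ S T : Set ℕ, (S \ T ∪ T \ S).Finite → S ∈ B → T ∈ B

/-- Proper extension of finite strings. -/
def StrictPrefix (α β : List ℕ) : Prop := α <+: β ∧ α ≠ β

/-- A `Δ⁰₂` embedding of Baire space, given by a uniformly computable sequence of
`≺`-isomorphisms on finite strings converging pointwise to `fstar`, inducing `toFun`. -/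
structure Delta02Embedding where
  fs : ℕ → List ℕ → List ℕ
  fstar : List ℕ → List ℕ
  toFun : (ℕ → ℕ) → (ℕ → ℕ)
  computable : Computable₂ fs
  iso : ∀ s α β, StrictPrefix α β ↔ StrictPrefix (fs s α) (fs s β)
  limit : ∀ α, ∃ N, ∀ s ≥ N, fs s α = fstar α
  union : ∀ X n, fstar (funToList X n) = funToList (toFun X) (fstar (funToList X n)).length
  unbounded : ∀ X k, ∃ n, k ≤ (fstar (funToList X n)).length

/-- Π⁰₂ classes of functions. -/
def Pi02Class (P : Set (ℕ → ℕ)) : Prop :=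
  ∃ h : ℕ → ℕ → List ℕ, Computable₂ h ∧
    P = {X | ∀ n, ∃ s, h n s = funToList X (h n s).length}

/-- `{e}` is total. -/
def TotCode (e : ℕ) : Prop := ∀ i, (phi e i).Dom

/-- The computable tree coded by `e`: the downward closure of `{ρ_i : {e}(i) = 1}`. -/
def TreeOf (e : ℕ) : Set (List ℕ) :=
  {σ | ∃ τ : List ℕ, σ <+: τ ∧ ∃ i : ℕ, Denumerable.ofNat (List ℕ) i = τ ∧ 1 ∈ phi e i}

/-- Codes of total functions whose coded tree has no infinite branch. -/
def NoPath : Set ℕ :=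
  {e | TotCode e ∧ ¬∃ X : ℕ → ℕ, ∀ n, funToList X n ∈ TreeOf e}

namespace DNCEmb

open Nat.Partrec.Code

def valAt (s n c : ℕ) : ℕ :=
  if evaln s (Denumerable.ofNat Nat.Partrec.Code n) n = some (2 * c)
  then 2 * c + 1 else 2 * c

open Classical in
noncomputable def valStar (n c : ℕ) : ℕ :=
  if (2 * c : ℕ) ∈ phi n n then 2 * c + 1 else 2 * c

def myfs (s : ℕ) (α : List ℕ) : List ℕ :=
  (List.range α.length).map fun n => valAt s n (Encodable.encode (α.take (n + 1)))

noncomputable def myfstar (α : List ℕ) : List ℕ :=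
  (List.range α.length).map fun n => valStar n (Encodable.encode (α.take (n + 1)))

noncomputable def myF (X : ℕ → ℕ) (n : ℕ) : ℕ :=
  valStar n (Encodable.encode (funToList X (n + 1)))

lemma valAt_div2 (s n c : ℕ) : valAt s n c / 2 = c := by
  unfold valAt; split <;> omega

lemma valStar_div2 (n c : ℕ) : valStar n c / 2 = c := by
  unfold valStar; split <;> omega

lemma myfs_length (s : ℕ) (α : List ℕ) : (myfs s α).length = α.length := by simp [myfs]

lemma myfstar_length (α : List ℕ) : (myfstar α).length = α.length := by simp [myfstar]

lemma myfs_take (s : ℕ) (β : List ℕ) (k : ℕ) (hk : k ≤ β.length) :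
    myfs s (β.take k) = (myfs s β).take k := by
  unfold myfs
  rw [List.length_take, Nat.min_eq_left hk, ← List.map_take, List.take_range,
    Nat.min_eq_left hk]
  apply List.map_congr_left
  intro n hn
  rw [List.take_take, Nat.min_eq_left (List.mem_range.mp hn)]

lemma myfs_inj {s : ℕ} {α β : List ℕ} (hl : α.length = β.length)
    (h : myfs s α = myfs s β) : α = β := by
  have key : ∀ n < α.length, α.take (n + 1) = β.take (n + 1) := by
    intro n hn
    have h1 := congrArg (fun l => l[n]?) h
    simp only [myfs, List.getElem?_map, List.getElem?_range hn, List.getElem?_range (hl ▸ hn),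
      Option.map_some] at h1
    have h2 := congrArg (Option.map (· / 2)) h1
    simp only [Option.map_some, valAt_div2, Option.some.injEq] at h2
    exact Encodable.encode_injective h2
  apply List.ext_getElem?
  intro i
  by_cases hi : i < α.length
  · have h3 := congrArg (fun l => l[i]?) (key i hi)
    simpa [List.getElem?_take_of_succ] using h3
  · rw [List.getElem?_eq_none (by omega), List.getElem?_eq_none (by omega)]

lemma myfs_iso (s : ℕ) (α β : List ℕ) :
    StrictPrefix α β ↔ StrictPrefix (myfs s α) (myfs s β) := by
  constructor
  · rintro ⟨hpre, hne⟩
    have hlt : α.length < β.length := by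
      rcases Nat.lt_or_ge α.length β.length with h | h
      · exact h
      · exact absurd (hpre.eq_of_length (le_antisymm hpre.length_le h)) hne
    constructor
    · rw [List.prefix_iff_eq_take.mp hpre, myfs_take s β α.length (le_of_lt hlt)]
      exact List.take_prefix _ _
    · intro he
      have := congrArg List.length he
      rw [myfs_length, myfs_length] at this
      omega
  · rintro ⟨hpre, hne⟩
    have hlen : α.length ≤ β.length := by
      have := hpre.length_le
      rwa [myfs_length, myfs_length] at this
    have hlt : α.length < β.length := by
      rcases lt_or_eq_of_le hlen with h | h
      · exact h
      · exact absurd (myfs_inj h (hpre.eq_of_length (by rw [myfs_length, myfs_length, h])) ▸ rfl)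
          hne
    have h1 : myfs s α = myfs s (β.take α.length) := by
      rw [myfs_take s β α.length (le_of_lt hlt)]
      have := List.prefix_iff_eq_take.mp hpre
      rwa [myfs_length] at this
    have h2 : α = β.take α.length :=
      myfs_inj (by rw [List.length_take, Nat.min_eq_left (le_of_lt hlt)]) h1
    constructor
    · rw [h2]; exact List.take_prefix _ _
    · intro he; rw [he] at hlt; omega

lemma valAt_limit (n c : ℕ) : ∃ N, ∀ s ≥ N, valAt s n c = valStar n c := by
  by_cases h : (2 * c : ℕ) ∈ phi n n
  · obtain ⟨k, hk⟩ := evaln_complete.mp h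
    refine ⟨k, fun s hs => ?_⟩
    have h2 : evaln s (Denumerable.ofNat Nat.Partrec.Code n) n = some (2 * c) :=
      evaln_mono hs hk
    simp [valAt, valStar, h2, h]
  · refine ⟨0, fun s _ => ?_⟩
    have h2 : ¬ evaln s (Denumerable.ofNat Nat.Partrec.Code n) n = some (2 * c) := fun he =>
      h (evaln_sound he)
    simp [valAt, valStar, h2, h]

lemma myfs_limit (α : List ℕ) : ∃ N, ∀ s ≥ N, myfs s α = myfstar α := by
  choose N hN using fun n => valAt_limit n (Encodable.encode (α.take (n + 1)))
  refine ⟨(Finset.range α.length).sup N, fun s hs => ?_⟩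
  unfold myfs myfstar
  apply List.map_congr_left
  intro n hn
  exact hN n s (le_trans (Finset.le_sup (Finset.mem_range.mpr (List.mem_range.mp hn))) hs)

lemma myfstar_funToList (X : ℕ → ℕ) (n : ℕ) :
    myfstar (funToList X n) = funToList (myF X) n := by
  have hlen : (funToList X n).length = n := by simp [funToList]
  unfold myfstar
  rw [hlen]
  apply List.map_congr_left
  intro m hm
  have hm' : m + 1 ≤ n := List.mem_range.mp hm
  have : (funToList X n).take (m + 1) = funToList X (m + 1) := by
    unfold funToList
    rw [← List.map_take, List.take_range, Nat.min_eq_left hm']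
  rw [this]
  rfl

lemma myF_dnc (X : ℕ → ℕ) : DNCfun (myF X) := by
  intro x y hy
  unfold myF valStar
  split
  · next h => have := Part.mem_unique h hy; omega
  · next h => exact fun he => h (he ▸ hy)

noncomputable def Xof (Y : ℕ → ℕ) (m : ℕ) : ℕ :=
  (Denumerable.ofNat (List ℕ) (Y m / 2)).getD m 0

lemma Xof_myF (X : ℕ → ℕ) : Xof (myF X) = X := by
  funext m
  unfold Xof myF
  rw [valStar_div2, Denumerable.ofNat_encode]
  unfold funToList
  rw [List.getD_eq_getElem _ _ (by simp)]
  simp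

lemma range_myF_closed : IsClosed (Set.range myF) := by
  have hrange : Set.range myF = ⋂ n, {Y : ℕ → ℕ | Y n = myF (Xof Y) n} := by
    ext Y
    simp only [Set.mem_range, Set.mem_iInter, Set.mem_setOf_eq]
    constructor
    · rintro ⟨X, rfl⟩ n
      rw [Xof_myF]
    · intro h
      exact ⟨Xof Y, funext fun n => (h n).symm⟩
  rw [hrange]
  apply isClosed_iInter
  intro n
  rw [← isOpen_compl_iff, isOpen_iff_mem_nhds]
  intro Y hY
  have hU : {Z : ℕ → ℕ | ∀ m ∈ Finset.range (n + 1), Z m = Y m} ∈ nhds Y := by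
    have he : {Z : ℕ → ℕ | ∀ m ∈ Finset.range (n + 1), Z m = Y m}
        = ⋂ m ∈ Finset.range (n + 1), {Z : ℕ → ℕ | Z m = Y m} := by
      ext Z; simp
    rw [he]
    apply (Filter.biInter_mem (Finset.finite_toSet _)).mpr
    intro m _
    have ho : IsOpen {Z : ℕ → ℕ | Z m = Y m} := by
      have : {Z : ℕ → ℕ | Z m = Y m} = (fun Z : ℕ → ℕ => Z m) ⁻¹' ({Y m} : Set ℕ) := by
        ext; simp
      rw [this]
      exact (continuous_apply m).isOpen_preimage _ (isOpen_discrete _)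
    exact ho.mem_nhds rfl
  apply Filter.mem_of_superset hU
  intro Z hZ hZmem
  apply hY
  have hXZ : funToList (Xof Z) (n + 1) = funToList (Xof Y) (n + 1) := by
    unfold funToList
    apply List.map_congr_left
    intro m hm
    unfold Xof
    rw [hZ m (Finset.mem_range.mpr (List.mem_range.mp hm))]
  show Y n = myF (Xof Y) n
  have hZn : Z n = myF (Xof Z) n := hZmem
  rw [← hZ n (Finset.mem_range.mpr (Nat.lt_succ_self n)), hZn]
  unfold myF
  rw [hXZ]

lemma take_eq_map_range {l : List ℕ} {n : ℕ} (h : n + 1 ≤ l.length) :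
    l.take (n + 1) = (List.range (n + 1)).map fun i => l.getD i 0 := by
  apply List.ext_getElem (by simp; omega)
  intro i h1 h2
  simp only [List.getElem_take, List.getElem_map, List.getElem_range]
  rw [List.getD_eq_getElem _ _ (by simp at h1 h2 ⊢; omega)]

lemma myfs_computable : Computable₂ myfs := by
  have hL : Primrec fun (q : (ℕ × List ℕ) × ℕ) =>
      (List.range (q.2 + 1)).map fun i => q.1.2.getD i 0 :=
    Primrec.list_map (Primrec.list_range.comp (Primrec.succ.comp Primrec.snd))
      (((Primrec.list_getD 0).comp (Primrec.snd.comp (Primrec.fst.comp Primrec.fst))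
        Primrec.snd).to₂)
  have hc : Primrec fun (q : (ℕ × List ℕ) × ℕ) =>
      Encodable.encode ((List.range (q.2 + 1)).map fun i => q.1.2.getD i 0) :=
    Primrec.encode.comp hL
  have h2c : Primrec fun (q : (ℕ × List ℕ) × ℕ) =>
      2 * Encodable.encode ((List.range (q.2 + 1)).map fun i => q.1.2.getD i 0) :=
    Primrec.nat_mul.comp (Primrec.const 2) hc
  have he : Primrec fun (q : (ℕ × List ℕ) × ℕ) =>
      evaln q.1.1 (Denumerable.ofNat Nat.Partrec.Code q.2) q.2 :=
    primrec_evaln.comp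
      ((((Primrec.fst.comp Primrec.fst).pair
        ((Primrec.ofNat Nat.Partrec.Code).comp Primrec.snd)).pair Primrec.snd))
  have hval : Primrec fun (q : (ℕ × List ℕ) × ℕ) =>
      valAt q.1.1 q.2 (Encodable.encode ((List.range (q.2 + 1)).map fun i => q.1.2.getD i 0)) := by
    unfold valAt
    exact Primrec.ite (Primrec.eq.comp he (Primrec.option_some.comp h2c))
      (Primrec.succ.comp h2c) h2c
  have hmain : Primrec fun (p : ℕ × List ℕ) => myfs p.1 p.2 := by
    have h0 : Primrec fun (p : ℕ × List ℕ) =>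
        (List.range p.2.length).map fun n =>
          valAt p.1 n (Encodable.encode ((List.range (n + 1)).map fun i => p.2.getD i 0)) :=
      Primrec.list_map (Primrec.list_range.comp (Primrec.list_length.comp Primrec.snd)) hval.to₂
    apply h0.of_eq
    rintro ⟨s, α⟩
    unfold myfs
    apply List.map_congr_left
    intro n hn
    rw [← take_eq_map_range (List.mem_range.mp hn)]
  exact hmain.to_comp

end DNCEmb

theorem exists_delta02_embedding_into_dnc :
    ∃ E : Delta02Embedding,
      IsClosed (Set.range E.toFun) ∧ ∀ X : ℕ → ℕ, DNCfun (E.toFun X) := by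
  refine ⟨⟨DNCEmb.myfs, DNCEmb.myfstar, DNCEmb.myF, DNCEmb.myfs_computable, DNCEmb.myfs_iso,
    DNCEmb.myfs_limit, ?_, ?_⟩, DNCEmb.range_myF_closed, DNCEmb.myF_dnc⟩
  · intro X n
    rw [DNCEmb.myfstar_funToList]
    simp [funToList]
  · intro X k
    exact ⟨k, by simp [DNCEmb.myfstar_length, funToList]⟩
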